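/- In ℂ[x,y,z], set p = x²z − y³z² − 3y²z + 2x − 3y − 1, Q = (1/2)y³z² + (3/2)y²z − (1/2)xz + (3/2)y + 1/2, and q = x − Q². Then the quotient algebras ℂ[x,y,z]/⟨p⟩ and ℂ[x,y,z]/⟨q⟩ are isomorphic as ℂ-algebras. -/

import Mathlib

open MvPolynomial

set_option maxHeartbeats 1000000 in
/-- The isomorphism part of Proposition 3.1 for the tom Dieck–Petrie hypersurface.
In `ℂ[x,y,z] = MvPolynomial (Fin 3) ℂ` with `x = X 0`, `y = X 1`, `z = X 2`:
`ℂ[x,y,z]/⟨p⟩ ≅ ℂ[x,y,z]/⟨q⟩` where `p = x²z - y³z² - 3y²z + 2x - 3y - 1` and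
`q = x - Q²` with `Q = (1/2)y³z² + (3/2)y²z - (1/2)xz + (3/2)y + 1/2`. -/
theorem tomDieckPetrie_isomorphism
    (p Q q : MvPolynomial (Fin 3) ℂ)
    (hp : p = X 0 ^ 2 * X 2 - X 1 ^ 3 * X 2 ^ 2 - 3 * X 1 ^ 2 * X 2 + 2 * X 0 - 3 * X 1 - 1)
    (hQ : Q = C (1/2 : ℂ) * X 1 ^ 3 * X 2 ^ 2 + C (3/2 : ℂ) * X 1 ^ 2 * X 2
        - C (1/2 : ℂ) * X 0 * X 2 + C (3/2 : ℂ) * X 1 + C (1/2 : ℂ))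
    (hq : q = X 0 - Q ^ 2) :
    Nonempty ((MvPolynomial (Fin 3) ℂ ⧸ Ideal.span {p}) ≃ₐ[ℂ]
      (MvPolynomial (Fin 3) ℂ ⧸ Ideal.span {q})) := by
  set σ : MvPolynomial (Fin 3) ℂ →ₐ[ℂ] MvPolynomial (Fin 3) ℂ :=
    aeval ![X 0 ^ 2, X 1, X 2] with hσ
  set τ : MvPolynomial (Fin 3) ℂ →ₐ[ℂ] MvPolynomial (Fin 3) ℂ :=
    aeval ![Q, X 1, X 2] with hτ
  have hσ0 : σ (X 0) = X 0 ^ 2 := by simp [hσ, aeval_X]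
  have hσ1 : σ (X 1) = X 1 := by simp [hσ, aeval_X]
  have hσ2 : σ (X 2) = X 2 := by simp [hσ, aeval_X]
  have hτ0 : τ (X 0) = Q := by simp [hτ, aeval_X]
  have hτ1 : τ (X 1) = X 1 := by simp [hτ, aeval_X]
  have hτ2 : τ (X 2) = X 2 := by simp [hτ, aeval_X]
  -- key identities
  have hC : (2 : MvPolynomial (Fin 3) ℂ) * C (1/2 : ℂ) = 1 := by
    rw [show (2 : MvPolynomial (Fin 3) ℂ) = C (2 : ℂ) from (map_ofNat C 2).symm, ← map_mul]
    norm_num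
  have hC3 : (C (3/2 : ℂ) : MvPolynomial (Fin 3) ℂ) = 3 * C (1/2 : ℂ) := by
    rw [show (3 : MvPolynomial (Fin 3) ℂ) = C (3 : ℂ) from (map_ofNat C 3).symm, ← map_mul]
    norm_num
  have key1 : σ q = p * (X 0 - C (1/2 : ℂ) ^ 2 * p) := by
    rw [hq, map_sub, map_pow, hσ0, hQ]
    simp only [hσ, map_add, map_sub, map_mul, map_pow, aeval_C, algebraMap_eq, hσ0, hσ1, hσ2, aeval_X,
      Matrix.cons_val_zero, Matrix.cons_val_one, Matrix.cons_val_two, Matrix.head_cons, Matrix.tail_cons]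
    rw [hp, hC3]
    linear_combination ((1 + 2 * C (1/2 : ℂ)) * X 0 *
      (X 0 ^ 2 * X 2 + X 0 - 3 * X 1 ^ 2 * X 2 - X 1 ^ 3 * X 2 ^ 2 - 3 * X 1 - 1)) * hC
  have key2 : τ p = q * (-X 2) := by
    rw [hp]
    simp only [map_add, map_sub, map_mul, map_pow, map_one, map_ofNat, hτ0, hτ1, hτ2]
    rw [hq, hQ, hC3]
    linear_combination (1 + 3 * X 1 + 3 * X 1 ^ 2 * X 2 + X 1 ^ 3 * X 2 ^ 2 - X 0 * X 2) * hC
  have key3 : σ Q = X 0 + (-(C (1/2 : ℂ)) * p) := by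
    rw [hQ]
    simp only [hσ, map_add, map_sub, map_mul, map_pow, aeval_C, algebraMap_eq, hσ0, hσ1, hσ2, aeval_X,
      Matrix.cons_val_zero, Matrix.cons_val_one, Matrix.cons_val_two, Matrix.head_cons, Matrix.tail_cons]
    rw [hp, hC3]
    linear_combination (X 0) * hC
  set Ip := Ideal.span ({p} : Set (MvPolynomial (Fin 3) ℂ)) with hIp
  set Iq := Ideal.span ({q} : Set (MvPolynomial (Fin 3) ℂ)) with hIq
  set mkp := Ideal.Quotient.mkₐ ℂ Ip with hmkp
  set mkq := Ideal.Quotient.mkₐ ℂ Iq with hmkq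
  have hp0 : mkp p = 0 := by
    rw [hmkp, Ideal.Quotient.mkₐ_eq_mk, Ideal.Quotient.eq_zero_iff_mem]
    exact Ideal.subset_span rfl
  have hq0 : mkq q = 0 := by
    rw [hmkq, Ideal.Quotient.mkₐ_eq_mk, Ideal.Quotient.eq_zero_iff_mem]
    exact Ideal.subset_span rfl
  have hker1 : ∀ a ∈ Iq, (mkp.comp σ) a = 0 := by
    intro a ha
    have hmem : σ a ∈ Ip := by
      have hle : Iq.map σ ≤ Ip := by
        rw [hIq, Ideal.map_span, Set.image_singleton, Ideal.span_le, Set.singleton_subset_iff]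
        exact Ideal.mem_span_singleton.mpr ⟨X 0 - C (1/2 : ℂ) ^ 2 * p, key1⟩
      exact hle (Ideal.mem_map_of_mem σ ha)
    show mkp (σ a) = 0
    rw [hmkp, Ideal.Quotient.mkₐ_eq_mk, Ideal.Quotient.eq_zero_iff_mem]
    exact hmem
  have hker2 : ∀ a ∈ Ip, (mkq.comp τ) a = 0 := by
    intro a ha
    have hmem : τ a ∈ Iq := by
      have hle : Ip.map τ ≤ Iq := by
        rw [hIp, Ideal.map_span, Set.image_singleton, Ideal.span_le, Set.singleton_subset_iff]
        exact Ideal.mem_span_singleton.mpr ⟨-X 2, key2⟩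
      exact hle (Ideal.mem_map_of_mem τ ha)
    show mkq (τ a) = 0
    rw [hmkq, Ideal.Quotient.mkₐ_eq_mk, Ideal.Quotient.eq_zero_iff_mem]
    exact hmem
  set F := Ideal.Quotient.liftₐ Iq (mkp.comp σ) hker1 with hF
  set G := Ideal.Quotient.liftₐ Ip (mkq.comp τ) hker2 with hG
  have hFmk : ∀ a : MvPolynomial (Fin 3) ℂ, F (mkq a) = mkp (σ a) := fun a => rfl
  have hGmk : ∀ a : MvPolynomial (Fin 3) ℂ, G (mkp a) = mkq (τ a) := fun a => rfl
  refine ⟨AlgEquiv.ofAlgHom G F ?_ ?_⟩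
  · -- G ∘ F = id on quotient by q
    apply Ideal.Quotient.algHom_ext
    apply MvPolynomial.algHom_ext
    intro i
    fin_cases i
    · show G (F (mkq (X 0))) = mkq (X 0)
      rw [hFmk, hσ0, hGmk, map_pow, hτ0]
      have h2 : Q ^ 2 = X 0 - q := by rw [hq]; ring
      rw [h2, map_sub, hq0, sub_zero]
    · show G (F (mkq (X 1))) = mkq (X 1)
      rw [hFmk, hσ1, hGmk, hτ1]
    · show G (F (mkq (X 2))) = mkq (X 2)
      rw [hFmk, hσ2, hGmk, hτ2]
  · -- F ∘ G = id on quotient by p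
    apply Ideal.Quotient.algHom_ext
    apply MvPolynomial.algHom_ext
    intro i
    fin_cases i
    · show F (G (mkp (X 0))) = mkp (X 0)
      rw [hGmk, hτ0, hFmk, key3, map_add, map_mul, hp0, mul_zero, add_zero]
    · show F (G (mkp (X 1))) = mkp (X 1)
      rw [hGmk, hτ1, hFmk, hσ1]
    · show F (G (mkp (X 2))) = mkp (X 2)
      rw [hGmk, hτ2, hFmk, hσ2]
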